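/- Let E : ℝⁿ × ℝᵖ → ℝ be twice continuously differentiable and let s⋆(θ) be a continuously differentiable family of critical points, i.e. ∇ₛE(s⋆(θ), θ) = 0 for all θ in an open set. Let ℓ : ℝⁿ → ℝ be differentiable and C(θ) := ℓ(s⋆(θ)). If λ⋆(θ) ∈ ℝⁿ satisfies ∇ℓ(s⋆(θ)) + ∇²ₛE(s⋆(θ), θ) · λ⋆(θ) = 0, then the total derivative of C satisfies d_θ C(θ) = ∂²_{s,θ}E(s⋆(θ), θ)ᵀ · λ⋆(θ), where ∂²_{s,θ}E denotes the mixed second partial derivative (Jacobian of ∇ₛE with respect to θ). -/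

import Mathlib

open scoped RealInnerProductSpace

noncomputable section

abbrev Euc (n : ℕ) := EuclideanSpace ℝ (Fin n)

open InnerProductSpace ContinuousLinearMap in
/-- Auxiliary: the joint gradient map is C¹ for a C² energy. -/
lemma aux_grad_contDiff {n p : ℕ} (E : Euc n → Euc p → ℝ)
    (hE : ContDiff ℝ 2 (Function.uncurry E)) :
    ContDiff ℝ 1 (fun q : Euc n × Euc p => gradient (fun s => E s q.2) q.1) := by
  have hD : ContDiff ℝ 1 (fderiv ℝ (Function.uncurry E)) :=
    hE.fderiv_right (by norm_num)
  set TD : (StrongDual ℝ (Euc n)) →L[ℝ] Euc n :=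
    (toDual ℝ (Euc n)).symm.toContinuousLinearEquiv.toContinuousLinearMap with hTD
  have key : ∀ q : Euc n × Euc p, gradient (fun s => E s q.2) q.1 =
      TD ((fderiv ℝ (Function.uncurry E) q).comp (ContinuousLinearMap.inl ℝ (Euc n) (Euc p))) := by
    intro q
    have h1 : HasFDerivAt (fun s : Euc n => E s q.2)
        ((fderiv ℝ (Function.uncurry E) q).comp (ContinuousLinearMap.inl ℝ (Euc n) (Euc p))) q.1 :=
      (hE.differentiable (by norm_num)).differentiableAt.hasFDerivAt.comp q.1
        ((hasFDerivAt_id q.1).prodMk (hasFDerivAt_const q.2 q.1))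
    simp only [gradient]
    rw [h1.fderiv]
    rfl
  rw [funext key]
  exact TD.contDiff.comp
    (((compL ℝ (Euc n) (Euc n × Euc p) ℝ).flip
      (ContinuousLinearMap.inl ℝ (Euc n) (Euc p))).contDiff.comp hD)

theorem stmt_2 {n p : ℕ}
    (E : Euc n → Euc p → ℝ)
    (hE : ContDiff ℝ 2 (Function.uncurry E))
    (V : Set (Euc p)) (hV : IsOpen V)
    (sstar : Euc p → Euc n) (hs : ContDiff ℝ 1 sstar)
    (hcrit : ∀ θ ∈ V, gradient (fun s => E s θ) (sstar θ) = 0)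
    (ℓ : Euc n → ℝ) (hℓ : Differentiable ℝ ℓ)
    (lam : Euc p → Euc n)
    (hlam : ∀ θ ∈ V, gradient ℓ (sstar θ) +
      (fderiv ℝ (fun s => gradient (fun s' => E s' θ) s) (sstar θ)) (lam θ) = 0)
    (θ : Euc p) (hθ : θ ∈ V) :
    gradient (fun θ' => ℓ (sstar θ')) θ =
      (ContinuousLinearMap.adjoint
        (fderiv ℝ (fun θ' => gradient (fun s => E s θ') (sstar θ)) θ)) (lam θ) := by
  have hGdiff := aux_grad_contDiff E hE
  set G : Euc n × Euc p → Euc n := fun q => gradient (fun s => E s q.2) q.1 with hGdef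
  set x := sstar θ with hxdef
  have hDG : DifferentiableAt ℝ G (x, θ) :=
    (hGdiff.differentiable one_ne_zero).differentiableAt
  set DG := fderiv ℝ G (x, θ) with hDGdef
  have hDs : HasFDerivAt sstar (fderiv ℝ sstar θ) θ :=
    ((hs.differentiable one_ne_zero) θ).hasFDerivAt
  set Ds := fderiv ℝ sstar θ with hDsdef
  -- H : Hessian block
  have hH : fderiv ℝ (fun s => gradient (fun s' => E s' θ) s) x
      = DG.comp (ContinuousLinearMap.inl ℝ (Euc n) (Euc p)) := by
    have h1 : HasFDerivAt (fun s : Euc n => G (s, θ))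
        (DG.comp (ContinuousLinearMap.inl ℝ (Euc n) (Euc p))) x :=
      hDG.hasFDerivAt.comp (g := G) (g' := DG) x ((hasFDerivAt_id (𝕜 := ℝ) x).prodMk (hasFDerivAt_const θ x))
    exact h1.fderiv
  set H := DG.comp (ContinuousLinearMap.inl ℝ (Euc n) (Euc p)) with hHdef
  -- M : mixed block
  have hM : fderiv ℝ (fun θ' => gradient (fun s => E s θ') x) θ
      = DG.comp (ContinuousLinearMap.inr ℝ (Euc n) (Euc p)) := by
    have h1 : HasFDerivAt (fun θ' : Euc p => G (x, θ'))
        (DG.comp (ContinuousLinearMap.inr ℝ (Euc n) (Euc p))) θ :=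
      hDG.hasFDerivAt.comp θ ((hasFDerivAt_const x θ).prodMk (hasFDerivAt_id θ))
    exact h1.fderiv
  set M := DG.comp (ContinuousLinearMap.inr ℝ (Euc n) (Euc p)) with hMdef
  -- differentiating the criticality identity
  have hzero : ∀ v : Euc p, H (Ds v) + M v = 0 := by
    have hcomp : HasFDerivAt (G ∘ (fun θ' => (sstar θ', θ')))
        (DG.comp (Ds.prod (ContinuousLinearMap.id ℝ (Euc p)))) θ := by
      refine HasFDerivAt.comp θ ?_ (hDs.prodMk (hasFDerivAt_id θ))
      exact hDG.hasFDerivAt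
    have heq : (G ∘ (fun θ' => (sstar θ', θ'))) =ᶠ[nhds θ] (fun _ => (0 : Euc n)) :=
      Filter.eventually_of_mem (hV.mem_nhds hθ) (fun θ' hθ' => hcrit θ' hθ')
    have h0 : DG.comp (Ds.prod (ContinuousLinearMap.id ℝ (Euc p))) = 0 := by
      rw [← hcomp.fderiv, heq.fderiv_eq]
      exact fderiv_const_apply 0
    intro v
    have := congrFun (congrArg (fun (T : Euc p →L[ℝ] Euc n) => (T : Euc p → Euc n)) h0) v
    simp only [ContinuousLinearMap.comp_apply, ContinuousLinearMap.prod_apply,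
      ContinuousLinearMap.coe_id', id_eq, ContinuousLinearMap.zero_apply] at this
    have hsum : ((Ds v, v) : Euc n × Euc p)
        = (ContinuousLinearMap.inl ℝ (Euc n) (Euc p)) (Ds v)
          + (ContinuousLinearMap.inr ℝ (Euc n) (Euc p)) v := by
      simp
    rw [hHdef, hMdef]
    simp only [ContinuousLinearMap.comp_apply]
    rw [← map_add, ← hsum, this]
  -- symmetry of the Hessian
  have hf2 : ContDiff ℝ 2 (fun s : Euc n => E s θ) :=
    hE.comp (contDiff_id.prodMk contDiff_const)
  have hsymm : ∀ u w : Euc n, ⟪H u, w⟫ = ⟪H w, u⟫ := by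
    set TD : (StrongDual ℝ (Euc n)) →L[ℝ] Euc n :=
      (InnerProductSpace.toDual ℝ (Euc n)).symm.toContinuousLinearEquiv.toContinuousLinearMap with hTD
    set f : Euc n → ℝ := fun s => E s θ with hfdef
    have hdf : HasFDerivAt (fderiv ℝ f) (fderiv ℝ (fderiv ℝ f) x) x :=
      (((hf2.fderiv_right (le_refl 2)).differentiable one_ne_zero) x).hasFDerivAt
    have h1 : HasFDerivAt (fun s => TD (fderiv ℝ f s))
        (TD.comp (fderiv ℝ (fderiv ℝ f) x)) x :=
      TD.hasFDerivAt.comp x hdf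
    have hHf : H = TD.comp (fderiv ℝ (fderiv ℝ f) x) := by
      rw [← hH, ← h1.fderiv]
      congr 1
    have hsym := (hf2.contDiffAt (x := x)).isSymmSndFDerivAt (by simp)
    intro u w
    rw [hHf]
    simp only [ContinuousLinearMap.comp_apply]
    have e1 : ⟪TD (fderiv ℝ (fderiv ℝ f) x u), w⟫ = fderiv ℝ (fderiv ℝ f) x u w :=
      InnerProductSpace.toDual_symm_apply
    have e2 : ⟪TD (fderiv ℝ (fderiv ℝ f) x w), u⟫ = fderiv ℝ (fderiv ℝ f) x w u :=
      InnerProductSpace.toDual_symm_apply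
    rw [e1, e2, hsym u w]
  -- adjoint equation
  have hadj : gradient ℓ x = -(H (lam θ)) := by
    have h := hlam θ hθ
    rw [hH] at h
    exact eq_neg_of_add_eq_zero_left h
  have hC : HasFDerivAt (fun θ' => ℓ (sstar θ')) ((fderiv ℝ ℓ x).comp Ds) θ :=
    (hℓ x).hasFDerivAt.comp θ hDs
  rw [hM]
  apply ext_inner_left ℝ
  intro v
  symm
  have h5 : H (Ds v) = -(M v) := eq_neg_of_add_eq_zero_left (hzero v)
  calc ⟪v, (ContinuousLinearMap.adjoint M) (lam θ)⟫
      = ⟪M v, lam θ⟫ := ContinuousLinearMap.adjoint_inner_right M v (lam θ)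
    _ = -⟪H (Ds v), lam θ⟫ := by rw [h5, inner_neg_left, neg_neg]
    _ = -⟪H (lam θ), Ds v⟫ := by rw [hsymm]
    _ = ⟪-(H (lam θ)), Ds v⟫ := by rw [inner_neg_left]
    _ = ⟪gradient ℓ x, Ds v⟫ := by rw [hadj]
    _ = fderiv ℝ ℓ x (Ds v) := InnerProductSpace.toDual_symm_apply
    _ = fderiv ℝ (fun θ' => ℓ (sstar θ')) θ v := by rw [hC.fderiv]; rfl
    _ = ⟪gradient (fun θ' => ℓ (sstar θ')) θ, v⟫ :=
        (InnerProductSpace.toDual_symm_apply).symm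
    _ = ⟪v, gradient (fun θ' => ℓ (sstar θ')) θ⟫ := real_inner_comm _ _
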